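/- Let ν be a probability measure on X, let κ and η be Markov kernels from X to Y, let x₀ ∈ X with {x₀} measurable and ν({x₀}) = 0, and let y₀ ∈ Y. Let η' be the Markov kernel with η'(x₀) = δ_{y₀} and η'(x) = η(x) for x ≠ x₀, and assume m(x) := MCMD_{κ,η}(x) is integrable with respect to ν. For ε ∈ (0, 1] define E-MCMD(ε) := ∫ ‖μ^κ(x) − μ^{η'}(x)‖_{H_Y} d((1−ε)ν + εδ_{x₀})(x), and set E-MCMD(0) := ∫ m dν. Then for every ε ∈ (0, 1], E-MCMD(ε) = (1−ε)·∫ m dν + ε·‖μ^κ(x₀) − φ(y₀)‖_{H_Y}, and consequently the influence −lim_{ε→0⁺} (E-MCMD(ε) − E-MCMD(0))/ε exists and equals ∫ m dν − ‖μ^κ(x₀) − φ(y₀)‖_{H_Y}; i.e., up to an additive constant independent of (x₀, y₀), the E-MCMD influence of the point (x₀, y₀) is −‖μ^κ(x₀) − φ(y₀)‖_{H_Y}. -/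

import Mathlib

open MeasureTheory ProbabilityTheory Filter Topology
open scoped ENNReal

/-- closed form of the perturbed E-MCMD and its influence, which up to an
additive constant is −‖μ^κ(x₀) − φ(y₀)‖. -/
theorem emcmd_influence
    {X Y : Type*} [MeasurableSpace X] [MeasurableSpace Y]
    {H : Type*} [NormedAddCommGroup H] [InnerProductSpace ℝ H] [CompleteSpace H]
    [MeasurableSpace H] [BorelSpace H]
    (φ : Y → H) (hφ : Measurable φ) (C : ℝ) (hC : ∀ y, ‖φ y‖ ≤ C)
    (ν : Measure X) [IsProbabilityMeasure ν]
    (κ η η' : Kernel X Y) [IsMarkovKernel κ] [IsMarkovKernel η] [IsMarkovKernel η']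
    (x₀ : X) (hx₀m : MeasurableSet {x₀}) (hx₀ : ν {x₀} = 0) (y₀ : Y)
    (hη'₀ : η' x₀ = Measure.dirac y₀)
    (hη' : ∀ x ≠ x₀, η' x = η x)
    (m : X → ℝ)
    (hm : ∀ x, m x = ‖(∫ y, φ y ∂(κ x)) - ∫ y, φ y ∂(η x)‖)
    (hmint : Integrable m ν)
    (EMCMD : ℝ → ℝ)
    (hEMCMD : ∀ ε ∈ Set.Ioc (0 : ℝ) 1,
      EMCMD ε = ∫ x, ‖(∫ y, φ y ∂(κ x)) - ∫ y, φ y ∂(η' x)‖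
        ∂(ENNReal.ofReal (1 - ε) • ν + ENNReal.ofReal ε • Measure.dirac x₀))
    (hEMCMD0 : EMCMD 0 = ∫ x, m x ∂ν) :
    (∀ ε ∈ Set.Ioc (0 : ℝ) 1,
      EMCMD ε = (1 - ε) * (∫ x, m x ∂ν) + ε * ‖(∫ y, φ y ∂(κ x₀)) - φ y₀‖) ∧
    Tendsto (fun ε : ℝ => -((EMCMD ε - EMCMD 0) / ε)) (𝓝[>] (0 : ℝ))
      (𝓝 ((∫ x, m x ∂ν) - ‖(∫ y, φ y ∂(κ x₀)) - φ y₀‖)) := by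
  classical
  have hφd : (∫ y, φ y ∂(Measure.dirac y₀)) = φ y₀ := by
    have hae : φ =ᵐ[Measure.dirac y₀] fun _ => φ y₀ := by
      refine measure_mono_null (t := (φ ⁻¹' {φ y₀})ᶜ) (fun y hy => ?_) ?_
      · simpa using hy
      · rw [Measure.dirac_apply' _ ((hφ (measurableSet_singleton (φ y₀))).compl)]
        simp
    rw [integral_congr_ae hae, integral_const]
    simp
  set I := ∫ x, m x ∂ν with hI
  set c₀ := ‖(∫ y, φ y ∂(κ x₀)) - φ y₀‖ with hc₀
  set g : X → ℝ := fun x => if x = x₀ then c₀ else m x with hg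
  have hf : ∀ x, ‖(∫ y, φ y ∂(κ x)) - ∫ y, φ y ∂(η' x)‖ = g x := by
    intro x
    by_cases h : x = x₀
    · subst h; simp [hg, hη'₀, hφd, hc₀]
    · simp [hg, h, hη' x h, hm]
  have hgν : g =ᵐ[ν] m := by
    refine measure_mono_null (t := {x₀}) (fun x hx => ?_) hx₀
    by_contra h
    rw [Set.mem_singleton_iff] at h
    exact hx (if_neg h)
  have hgδ : g =ᵐ[Measure.dirac x₀] fun _ => c₀ := by
    refine measure_mono_null (t := {x₀}ᶜ) (fun x hx => ?_) ?_
    · by_contra h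
      simp only [Set.mem_compl_iff, Set.mem_singleton_iff, not_not] at h
      exact hx (by simp [hg, h])
    · rw [Measure.dirac_apply' _ hx₀m.compl]
      simp
  have key : ∀ ε ∈ Set.Ioc (0 : ℝ) 1, EMCMD ε = (1 - ε) * I + ε * c₀ := by
    intro ε hε
    have h1 : Integrable g (ENNReal.ofReal (1 - ε) • ν) :=
      (hmint.congr hgν.symm).smul_measure (by simp)
    have h2 : Integrable g (ENNReal.ofReal ε • Measure.dirac x₀) :=
      ((integrable_const c₀).congr hgδ.symm).smul_measure (by simp)
    rw [hEMCMD ε hε]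
    simp_rw [hf]
    rw [integral_add_measure h1 h2, integral_smul_measure, integral_smul_measure,
      integral_congr_ae hgν, integral_congr_ae hgδ, integral_const,
      ENNReal.toReal_ofReal (by linarith [hε.2] : (0:ℝ) ≤ 1 - ε),
      ENNReal.toReal_ofReal (le_of_lt hε.1)]
    simp [smul_eq_mul, hI]
  refine ⟨fun ε hε => key ε hε, ?_⟩
  have hev : (fun ε : ℝ => -((EMCMD ε - EMCMD 0) / ε)) =ᶠ[𝓝[>] (0:ℝ)]
      fun _ => I - c₀ := by
    filter_upwards [Ioc_mem_nhdsGT_of_mem (by simp : (0:ℝ) ∈ Set.Ico (0:ℝ) 1)]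
      with ε hε
    have hε0 : ε ≠ 0 := ne_of_gt hε.1
    rw [key ε hε, hEMCMD0]
    field_simp
    ring
  exact Tendsto.congr' hev.symm tendsto_const_nhds
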